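/- Let c = x + y where x ∈ Û (a subspace with orthonormal basis matrix Û) and y ∈ Û^⊥, and let ĉ = Û(Û_Ω^T Û_Ω)^{-1} Û_Ω^T c_Ω. If ||(Û_Ω^T Û_Ω)^{-1}||₂ ≤ n/((1−γ)m) and ||Û_Ω^T y_Ω||₂² ≤ β (m/n)(rμ(Û)/n) ||y||₂², then ||c − ĉ||² ≤ (1 + rμ(Û)β/(m(1−γ)²)) ||y||₂². -/

import Mathlib

open Matrix

noncomputable def coh {ι : Type*} [Fintype ι] [DecidableEq ι]
    (U : Submodule ℝ (EuclideanSpace ℝ ι)) : ℝ :=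
  ((Fintype.card ι : ℝ) / (Module.finrank ℝ U : ℝ)) *
    ⨆ j : ι, ‖(U.orthogonalProjection (EuclideanSpace.single j 1) : EuclideanSpace ℝ ι)‖ ^ 2

def colspan {n d : ℕ} (U : Matrix (Fin n) (Fin d) ℝ) :
    Submodule ℝ (EuclideanSpace ℝ (Fin n)) :=
  Submodule.span ℝ (Set.range fun j => (WithLp.toLp 2 (fun i => U i j) : EuclideanSpace ℝ (Fin n)))

/-- let `c = x + y` with `x` in the column span of the orthonormal
basis matrix `Û` and `y` orthogonal to it, and `ĉ = Û(Û_Ωᵀ Û_Ω)⁻¹ Û_Ωᵀ c_Ω`. If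
`‖(Û_Ωᵀ Û_Ω)⁻¹‖₂ ≤ n/((1−γ)m)` (as an operator bound) and
`‖Û_Ωᵀ y_Ω‖² ≤ β (m/n)(r μ(Û)/n) ‖y‖²`, then
`‖c − ĉ‖² ≤ (1 + r μ(Û) β/(m(1−γ)²)) ‖y‖²`. -/
theorem noisy_reconstruction_error {n r m : ℕ}
    (Uh : Matrix (Fin n) (Fin r) ℝ) (hU : Uhᵀ * Uh = 1)
    (ω : Fin m → Fin n) (UΩ : Matrix (Fin m) (Fin r) ℝ)
    (hUΩ : UΩ = Uh.submatrix ω id)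
    (c x y : EuclideanSpace ℝ (Fin n)) (hc : c = x + y)
    (hx : x ∈ colspan Uh) (hy : y ∈ (colspan Uh)ᗮ)
    (β γ : ℝ) (hβ : 0 < β) (hγ0 : 0 < γ) (hγ1 : γ < 1)
    (hxrec : Uh.mulVec ((UΩᵀ * UΩ)⁻¹.mulVec (UΩᵀ.mulVec fun i => x (ω i))) = x)
    (hop : ∀ z : Fin r → ℝ, ∑ j, ((UΩᵀ * UΩ)⁻¹.mulVec z j) ^ 2 ≤
      ((n : ℝ) / ((1 - γ) * m)) ^ 2 * ∑ j, (z j) ^ 2)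
    (hUy : ∑ j, (UΩᵀ.mulVec (fun i => y (ω i)) j) ^ 2 ≤
      β * (m / n) * ((r : ℝ) * coh (colspan Uh) / n) * ‖y‖ ^ 2) :
    ∑ i, (c i - Uh.mulVec ((UΩᵀ * UΩ)⁻¹.mulVec (UΩᵀ.mulVec fun i' => c (ω i'))) i) ^ 2 ≤
      (1 + (r : ℝ) * coh (colspan Uh) * β / (m * (1 - γ) ^ 2)) * ‖y‖ ^ 2 := by
  set w : Fin r → ℝ := (UΩᵀ * UΩ)⁻¹.mulVec (UΩᵀ.mulVec fun i => y (ω i)) with hw_def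
  set v : Fin n → ℝ := Uh.mulVec w with hv_def
  -- ĉ = x + v
  have hsplit : (fun i' => c (ω i')) =
      ((fun i' => x (ω i')) : Fin m → ℝ) + ((fun i' => y (ω i')) : Fin m → ℝ) := by
    funext i; simp [hc]
  have hchat : Uh.mulVec ((UΩᵀ * UΩ)⁻¹.mulVec (UΩᵀ.mulVec fun i' => c (ω i'))) = x + v := by
    rw [hsplit, Matrix.mulVec_add, Matrix.mulVec_add, Matrix.mulVec_add, hxrec]
  -- columns are orthogonal to y
  have hcol : ∀ j, ∑ i, Uh i j * y i = 0 := by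
    intro j
    have hmem : (WithLp.toLp 2 (fun i => Uh i j) : EuclideanSpace ℝ (Fin n)) ∈ colspan Uh :=
      Submodule.subset_span ⟨j, rfl⟩
    have h0 := (Submodule.mem_orthogonal _ _).mp hy _ hmem
    simpa [PiLp.inner_apply, RCLike.inner_apply, mul_comm] using h0
  -- cross term vanishes
  have hcross : ∑ i, y i * v i = 0 := by
    simp only [hv_def, Matrix.mulVec, dotProduct, Finset.mul_sum]
    rw [Finset.sum_comm]
    refine Finset.sum_eq_zero fun j _ => ?_
    have : ∑ i, y i * (Uh i j * w j) = (∑ i, Uh i j * y i) * w j := by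
      rw [Finset.sum_mul]; exact Finset.sum_congr rfl fun i _ => by ring
    rw [this, hcol j, zero_mul]
  -- ∑ v² = ∑ w²
  have hvv : ∑ i, v i ^ 2 = ∑ j, w j ^ 2 := by
    have h1 : v ⬝ᵥ v = w ⬝ᵥ w := by
      calc v ⬝ᵥ v = v ⬝ᵥ Uh.mulVec w := rfl
        _ = Uhᵀ.mulVec v ⬝ᵥ w := by
            rw [Matrix.dotProduct_mulVec, Matrix.mulVec_transpose]
        _ = (Uhᵀ * Uh).mulVec w ⬝ᵥ w := by rw [hv_def, Matrix.mulVec_mulVec]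
        _ = w ⬝ᵥ w := by rw [hU, Matrix.one_mulVec]
    simpa [dotProduct, pow_two] using h1
  -- ‖y‖² in coordinates
  have hnorm : ‖y‖ ^ 2 = ∑ i, y i ^ 2 := by
    rw [EuclideanSpace.norm_eq, Real.sq_sqrt (by positivity)]
    simp [sq_abs]
  -- coherence is nonnegative
  have hμ : 0 ≤ coh (colspan Uh) := by
    refine mul_nonneg (by positivity) (Real.iSup_nonneg fun j => by positivity)
  -- key bound on ∑ w²
  have heq : ((n : ℝ) / ((1 - γ) * m)) ^ 2 * (β * (m / n) * ((r : ℝ) * coh (colspan Uh) / n))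
      = (r : ℝ) * coh (colspan Uh) * β / (m * (1 - γ) ^ 2) := by
    have hγ : (1 : ℝ) - γ ≠ 0 := by linarith
    rcases Nat.eq_zero_or_pos m with hm | hm
    · subst hm; simp
    rcases Nat.eq_zero_or_pos n with hn | hn
    · subst hn
      have : coh (colspan Uh) = 0 := by simp [coh]
      simp [this]
    have hm' : (m : ℝ) ≠ 0 := Nat.cast_ne_zero.mpr hm.ne'
    have hn' : (n : ℝ) ≠ 0 := Nat.cast_ne_zero.mpr hn.ne'
    field_simp
  have hwbound : ∑ j, w j ^ 2 ≤
      (r : ℝ) * coh (colspan Uh) * β / (m * (1 - γ) ^ 2) * ‖y‖ ^ 2 := by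
    have h1 := hop (UΩᵀ.mulVec fun i => y (ω i))
    have h2 : ((n : ℝ) / ((1 - γ) * m)) ^ 2 * ∑ j, (UΩᵀ.mulVec (fun i => y (ω i)) j) ^ 2 ≤
        ((n : ℝ) / ((1 - γ) * m)) ^ 2 *
          (β * (m / n) * ((r : ℝ) * coh (colspan Uh) / n) * ‖y‖ ^ 2) :=
      mul_le_mul_of_nonneg_left hUy (sq_nonneg _)
    calc ∑ j, w j ^ 2 ≤ ((n : ℝ) / ((1 - γ) * m)) ^ 2 *
          (β * (m / n) * ((r : ℝ) * coh (colspan Uh) / n) * ‖y‖ ^ 2) := le_trans h1 h2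
      _ = ((n : ℝ) / ((1 - γ) * m)) ^ 2 *
          (β * (m / n) * ((r : ℝ) * coh (colspan Uh) / n)) * ‖y‖ ^ 2 := by ring
      _ = _ := by rw [heq]
  -- putting it together
  have hLHS : ∑ i, (c i - Uh.mulVec ((UΩᵀ * UΩ)⁻¹.mulVec
      (UΩᵀ.mulVec fun i' => c (ω i'))) i) ^ 2 = ∑ i, y i ^ 2 + ∑ j, w j ^ 2 := by
    rw [hchat]
    have : ∀ i, c i - (x + v) i = y i - v i := by
      intro i; simp [hc]
    simp only [this]
    have hexp : ∀ i : Fin n, (y i - v i) ^ 2 = y i ^ 2 - 2 * (y i * v i) + v i ^ 2 := by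
      intro i; ring
    rw [Finset.sum_congr rfl fun i _ => hexp i]
    rw [Finset.sum_add_distrib, Finset.sum_sub_distrib, ← Finset.mul_sum, hcross, hvv]
    ring
  rw [hLHS, ← hnorm]
  nlinarith [sq_nonneg (‖y‖)]
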